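/- For k < n/2 and i = -l + 2k < 0 with j = n - l, there is an injection from the set of four-step lattice paths of length n from the origin to (i,j) into the set of such paths ending at (i+2, j), obtained by reflecting the portion after the last intersection with the vertical line x = i+1. -/

import Mathlib

/-- A four-step lattice path, recorded by its list of steps. -/
def IsFourStepPath (p : List (ℤ × ℤ)) : Prop :=
  ∀ s ∈ p, s = (0, 1) ∨ s = (1, 0) ∨ s = (0, -1) ∨ s = (-1, 0)

namespace FourStepAux

/-- negate the x-component of a step -/
def negx : ℤ × ℤ → ℤ × ℤ := fun s => (-s.1, s.2)

lemma negx_negx (s : ℤ × ℤ) : negx (negx s) = s := by simp [negx]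

/-- x-coordinate after `t` steps -/
def X (p : List (ℤ × ℤ)) (t : ℕ) : ℤ := ((p.take t).map Prod.fst).sum

lemma fst_sum (l : List (ℤ × ℤ)) : (l.sum).1 = (l.map Prod.fst).sum := by
  induction l with
  | nil => simp
  | cons a l ih => simp [ih]

lemma snd_sum (l : List (ℤ × ℤ)) : (l.sum).2 = (l.map Prod.snd).sum := by
  induction l with
  | nil => simp
  | cons a l ih => simp [ih]

lemma X_zero (p : List (ℤ × ℤ)) : X p 0 = 0 := by simp [X]

lemma X_length (p : List (ℤ × ℤ)) : X p p.length = (p.map Prod.fst).sum := by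
  simp [X]

lemma X_succ (p : List (ℤ × ℤ)) (t : ℕ) (ht : t < p.length) :
    X p (t + 1) = X p t + (p.get ⟨t, ht⟩).1 := by
  unfold X
  rw [List.take_succ, List.map_append, List.sum_append]
  congr 1
  rw [List.getElem?_eq_getElem ht]
  simp [List.get_eq_getElem]

lemma X_add (p : List (ℤ × ℤ)) (m k : ℕ) :
    X p (m + k) = X p m + (((p.drop m).take k).map Prod.fst).sum := by
  simp [X, List.take_add]

lemma X_step_ge (p : List (ℤ × ℤ)) (hp : IsFourStepPath p) (t : ℕ) (ht : t < p.length) :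
    X p t - 1 ≤ X p (t + 1) := by
  rw [X_succ p t ht]
  have hmem : p.get ⟨t, ht⟩ ∈ p := List.get_mem p _
  rcases hp _ hmem with h | h | h | h <;> rw [h] <;> simp <;> omega

/-- reflection of the tail after time `m` -/
def R (p : List (ℤ × ℤ)) (m : ℕ) : List (ℤ × ℤ) :=
  p.take m ++ (p.drop m).map negx

lemma R_length (p : List (ℤ × ℤ)) (m : ℕ) : (R p m).length = p.length := by
  simp [R]
  omega

lemma R_path (p : List (ℤ × ℤ)) (m : ℕ) (hp : IsFourStepPath p) :
    IsFourStepPath (R p m) := by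
  intro s hs
  rcases List.mem_append.1 hs with h | h
  · exact hp s (List.mem_of_mem_take h)
  · obtain ⟨a, ha, rfl⟩ := List.mem_map.1 h
    rcases hp a (List.mem_of_mem_drop ha) with h' | h' | h' | h' <;>
      simp [negx, h']

lemma take_R (p : List (ℤ × ℤ)) (m : ℕ) (hm : m ≤ p.length) :
    (R p m).take m = p.take m :=
  List.take_left' (by simp [List.length_take]; omega)

lemma drop_R (p : List (ℤ × ℤ)) (m : ℕ) (hm : m ≤ p.length) :
    (R p m).drop m = (p.drop m).map negx :=
  List.drop_left' (by simp [List.length_take]; omega)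

lemma R_R (p : List (ℤ × ℤ)) (m : ℕ) (hm : m ≤ p.length) :
    R (R p m) m = p := by
  have h0 : R (R p m) m = (R p m).take m ++ ((R p m).drop m).map negx := rfl
  rw [h0, take_R p m hm, drop_R p m hm, List.map_map]
  have : negx ∘ negx = id := funext negx_negx
  rw [this, List.map_id, List.take_append_drop]

lemma X_R_le (p : List (ℤ × ℤ)) (m t : ℕ) (ht : t ≤ m) (hm : m ≤ p.length) :
    X (R p m) t = X p t := by
  unfold X
  have h1 : (R p m).take t = ((R p m).take m).take t := by
    rw [List.take_take, min_eq_left ht]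
  rw [h1, take_R p m hm, List.take_take, min_eq_left ht]

lemma X_R_ge (p : List (ℤ × ℤ)) (m t : ℕ) (hmt : m ≤ t) (hm : m ≤ p.length) :
    X (R p m) t = 2 * X p m - X p t := by
  obtain ⟨k, rfl⟩ := Nat.exists_eq_add_of_le hmt
  rw [X_add, X_add]
  have hd : (R p m).drop m = (p.drop m).map negx := drop_R p m hm
  have h1 : X (R p m) m = X p m := X_R_le p m m le_rfl hm
  rw [h1, hd, ← List.map_take, List.map_map]
  have h2 : ∀ l : List (ℤ × ℤ), (l.map (Prod.fst ∘ negx)).sum = -((l.map Prod.fst).sum) := by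
    intro l
    induction l with
    | nil => simp
    | cons a l ih => simp [negx, ih]; ring
  rw [h2]
  ring

lemma snd_R (p : List (ℤ × ℤ)) (m : ℕ) :
    ((R p m).map Prod.snd).sum = (p.map Prod.snd).sum := by
  unfold R
  rw [List.map_append, List.map_map]
  have : (Prod.snd ∘ negx) = (Prod.snd : ℤ × ℤ → ℤ) := rfl
  rw [this, List.sum_append, ← List.sum_append, ← List.map_append,
    List.take_append_drop]

/-- the last crossing of level `c = i+1` exists and `findGreatest` finds it -/
lemma lastcross (p : List (ℤ × ℤ)) (n : ℕ) (i : ℤ) (hlen : p.length = n)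
    (hp : IsFourStepPath p) (hi1 : i + 1 ≤ 0) (hend : X p n = i) :
    Nat.findGreatest (fun t => i + 1 ≤ X p t) n < n ∧
    X p (Nat.findGreatest (fun t => i + 1 ≤ X p t) n) = i + 1 ∧
    ∀ t, Nat.findGreatest (fun t => i + 1 ≤ X p t) n < t → t ≤ n → X p t < i + 1 := by
  set m := Nat.findGreatest (fun t => i + 1 ≤ X p t) n with hmdef
  have hmle : m ≤ n := Nat.findGreatest_le n
  have hP0 : i + 1 ≤ X p 0 := by rw [X_zero]; omega
  have hPm : i + 1 ≤ X p m := by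
    rw [hmdef]
    exact Nat.findGreatest_spec (P := fun t => i + 1 ≤ X p t) (Nat.zero_le n) hP0
  have hgr : ∀ t, m < t → t ≤ n → ¬ (i + 1 ≤ X p t) := fun t h1 h2 =>
    Nat.findGreatest_is_greatest h1 h2
  have hPn : ¬ (i + 1 ≤ X p n) := by rw [hend]; omega
  have hmn : m < n := by
    rcases lt_or_eq_of_le hmle with h | h
    · exact h
    · exact absurd (h ▸ hPm) hPn
  have hstep : X p m - 1 ≤ X p (m + 1) := by
    apply X_step_ge p hp
    omega
  have hlt : ¬ (i + 1 ≤ X p (m + 1)) := hgr (m + 1) (Nat.lt_succ_self m) (by omega)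
  have heq : X p m = i + 1 := by omega
  refine ⟨hmn, heq, ?_⟩
  intro t h1 h2
  have := hgr t h1 h2
  omega

lemma findGreatest_eq_of (P : ℕ → Prop) [DecidablePred P] (n m : ℕ) (hm : m ≤ n)
    (hPm : P m) (hgr : ∀ t, m < t → t ≤ n → ¬ P t) :
    Nat.findGreatest P n = m := by
  refine le_antisymm ?_ (Nat.le_findGreatest hm hPm)
  by_contra h
  push_neg at h
  exact hgr _ h (Nat.findGreatest_le n)
    (Nat.findGreatest_spec hm hPm)

end FourStepAux

open FourStepAux in
/-- For `k < n/2` and `i = -l + 2k < 0`, `j = n - l`, there is an injection from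
four-step lattice paths of length `n` from the origin to `(i,j)` into those
ending at `(i+2, j)`. -/
theorem four_step_injection (n l k : ℕ) (hk : 2 * k < n)
    (i : ℤ) (hi : i = -(l : ℤ) + 2 * k) (hineg : i < 0)
    (j : ℤ) (hj : j = (n : ℤ) - l) :
    ∃ f : {p : List (ℤ × ℤ) // p.length = n ∧ IsFourStepPath p ∧ p.sum = (i, j)} →
        {p : List (ℤ × ℤ) // p.length = n ∧ IsFourStepPath p ∧ p.sum = (i + 2, j)},
      Function.Injective f := by
  classical
  have hi1 : i + 1 ≤ 0 := by omega
  -- the index at which we reflect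
  set μ : List (ℤ × ℤ) → ℕ := fun p => Nat.findGreatest (fun t => i + 1 ≤ X p t) n with hμ
  have key : ∀ p : List (ℤ × ℤ), p.length = n → IsFourStepPath p → p.sum = (i, j) →
      μ p < n ∧ X p (μ p) = i + 1 ∧ ∀ t, μ p < t → t ≤ n → X p t < i + 1 := by
    intro p hlen hp hsum
    have hend : X p n = i := by
      have h := X_length p
      rw [hlen] at h
      rw [h, ← fst_sum, hsum]
    exact lastcross p n i hlen hp hi1 hend
  refine ⟨fun q => ⟨R q.val (μ q.val), ?_, ?_, ?_⟩, ?_⟩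
  · obtain ⟨hlen, hp, hsum⟩ := q.2
    rw [R_length]; exact hlen
  · exact R_path _ _ q.2.2.1
  · obtain ⟨hlen, hp, hsum⟩ := q.2
    obtain ⟨h1, h2, h3⟩ := key q.val hlen hp hsum
    have hm : μ q.val ≤ q.val.length := by omega
    have hx : X (R q.val (μ q.val)) n = i + 2 := by
      rw [X_R_ge _ _ _ (by omega) hm, h2]
      have h : X q.val n = i := by
        have h := X_length q.val
        rw [hlen] at h
        rw [h, ← fst_sum, hsum]
      rw [h]; ring
    have hy : ((R q.val (μ q.val)).map Prod.snd).sum = j := by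
      rw [snd_R, ← snd_sum, hsum]
    have hlen' : (R q.val (μ q.val)).length = n := by rw [R_length, hlen]
    refine Prod.ext ?_ ?_
    · show (R q.val (μ q.val)).sum.1 = i + 2
      rw [fst_sum, ← X_length, hlen']
      exact hx
    · show (R q.val (μ q.val)).sum.2 = j
      rw [snd_sum]
      exact hy
  · -- injectivity
    intro a b hab
    have hval : R a.val (μ a.val) = R b.val (μ b.val) := congrArg Subtype.val hab
    obtain ⟨ha1, ha2, ha3⟩ := key a.val a.2.1 a.2.2.1 a.2.2.2
    obtain ⟨hb1, hb2, hb3⟩ := key b.val b.2.1 b.2.2.1 b.2.2.2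
    have hma : μ a.val ≤ a.val.length := by rw [a.2.1]; omega
    have hmb : μ b.val ≤ b.val.length := by rw [b.2.1]; omega
    -- the reflection index is recoverable from the image:
    have recover : ∀ p : List (ℤ × ℤ), p.length = n → (hm : μ p ≤ p.length) →
        μ p < n → X p (μ p) = i + 1 → (∀ t, μ p < t → t ≤ n → X p t < i + 1) →
        Nat.findGreatest (fun t => X (R p (μ p)) t = i + 1) n = μ p := by
      intro p hlen hm h1 h2 h3
      apply findGreatest_eq_of _ _ _ (le_of_lt h1)
      · rw [X_R_le p _ _ le_rfl hm, h2]
      · intro t ht1 ht2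
        rw [X_R_ge p _ _ (le_of_lt ht1) hm, h2]
        have := h3 t ht1 ht2
        omega
    have e1 := recover a.val a.2.1 hma ha1 ha2 ha3
    have e2 := recover b.val b.2.1 hmb hb1 hb2 hb3
    rw [hval] at e1
    have hmm : μ a.val = μ b.val := e1.symm.trans e2
    apply Subtype.ext
    calc a.val = R (R a.val (μ a.val)) (μ a.val) := (R_R a.val _ hma).symm
      _ = R (R b.val (μ b.val)) (μ b.val) := by rw [hval, hmm]
      _ = b.val := R_R b.val _ hmb
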